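/- Separability criterion: Let A be a P-Frobenius algebra over k with Frobenius system (ψ, xᵢ, qᵢ, yᵢ). Then A is separable over k if and only if there exists d ∈ P ⊗ A such that Σᵢ xᵢ qᵢ d yᵢ = 1_A (using the pairing Q ⊗ P → k). -/

import Mathlib

set_option maxHeartbeats 1000000

open scoped TensorProduct

def IsInvertibleModule (k P : Type*) [CommRing k] [AddCommGroup P] [Module k P] : Prop :=
  Module.Finite k P ∧ Module.Projective k P ∧ Function.Bijective (contractRight k P)

section aux2
variable {k : Type*} [CommRing k]

open TensorProduct LinearMap

/-- If all dual functionals kill `z : P ⊗ N` (P projective), then `z = 0`. -/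
lemma rTensor_dual_eq_zero {P N : Type*} [AddCommGroup P] [Module k P]
    [AddCommGroup N] [Module k N] (hproj : Module.Projective k P)
    (z : P ⊗[k] N) (h : ∀ q : Module.Dual k P, LinearMap.rTensor N q z = 0) : z = 0 := by
  classical
  obtain ⟨s, hs⟩ := Module.projective_def.mp hproj
  have hcomp : ∀ (i : P) (w : (P →₀ k) ⊗[k] N),
      TensorProduct.finsuppScalarLeft k N P w i
        = TensorProduct.lid k N (LinearMap.rTensor N (Finsupp.lapply i) w) := by
    intro i w
    induction w using TensorProduct.induction_on with
    | zero => simp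
    | tmul g v => simp [TensorProduct.finsuppScalarLeft_apply_tmul_apply]
    | add w1 w2 h1 h2 => simp [map_add, h1, h2]
  have h2 : LinearMap.rTensor N s z = 0 := by
    have h3 : TensorProduct.finsuppScalarLeft k N P (LinearMap.rTensor N s z) = 0 := by
      ext i
      rw [hcomp, ← LinearMap.comp_apply, ← LinearMap.rTensor_comp]
      rw [h (Finsupp.lapply i ∘ₗ s)]
      simp
    exact (_root_.map_eq_zero_iff _ (TensorProduct.finsuppScalarLeft k N P).injective).mp h3
  have h4 : (Finsupp.linearCombination k (_root_.id : P → P)) ∘ₗ s = LinearMap.id :=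
    LinearMap.ext fun p => hs p
  calc z = LinearMap.rTensor N (LinearMap.id) z := by simp
    _ = LinearMap.rTensor N ((Finsupp.linearCombination k (_root_.id : P → P)) ∘ₗ s) z := by rw [h4]
    _ = LinearMap.rTensor N (Finsupp.linearCombination k (_root_.id : P → P))
          (LinearMap.rTensor N s z) := by rw [LinearMap.rTensor_comp]; rfl
    _ = 0 := by rw [h2, map_zero]

variable {P : Type*} [AddCommGroup P] [Module k P]

/-- key symmetry for invertible modules -/
lemma dual_symm_aux (hfin : Module.Finite k P) (hproj : Module.Projective k P)
    (hbij : Function.Bijective (contractRight k P))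
    (f g : Module.Dual k P) (p p' : P) : f p * g p' = g p * f p' := by
  classical
  obtain ⟨c, hc⟩ := hbij.surjective 1
  have hstar : ∀ (u : P) (q : Module.Dual k P), u ⊗ₜ[k] q = q u • c := by
    intro u q
    apply hbij.injective
    rw [map_smul, hc, contractRight_apply, smul_eq_mul, mul_one]
  -- the canonical endomorphism τ
  let τ : P →ₗ[k] P :=
    { toFun := fun v => TensorProduct.rid k P
        (LinearMap.lTensor P (Module.Dual.eval k P v) c)
      map_add' := by
        intro v w
        simp only [map_add, LinearMap.lTensor_add, LinearMap.add_apply]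
      map_smul' := by
        intro r v
        simp only [map_smul, LinearMap.lTensor_smul, LinearMap.smul_apply,
          RingHom.id_apply] }
  have key5 : ∀ (q : Module.Dual k P) (u v : P), q u • τ v = q v • u := by
    intro q u v
    have h := congrArg
      (fun z => TensorProduct.rid k P (LinearMap.lTensor P (Module.Dual.eval k P v) z))
      (hstar u q)
    simp only [map_smul] at h
    have hτ : q u • τ v = q u • (TensorProduct.rid k P)
        ((LinearMap.lTensor P (Module.Dual.eval k P v)) c) := rfl
    rw [hτ, ← h, LinearMap.lTensor_tmul, TensorProduct.rid_tmul]
    simp [Module.Dual.eval]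
  have C6 : ∀ u v : P, u ⊗ₜ[k] (τ v) = v ⊗ₜ[k] u := by
    intro u v
    have hz : ∀ q : Module.Dual k P,
        LinearMap.rTensor P q (u ⊗ₜ[k] (τ v) - v ⊗ₜ[k] u) = 0 := by
      intro q
      rw [map_sub, LinearMap.rTensor_tmul, LinearMap.rTensor_tmul]
      apply (TensorProduct.lid k P).injective
      rw [map_sub, map_zero, TensorProduct.lid_tmul, TensorProduct.lid_tmul,
        key5, sub_self]
    have := rTensor_dual_eq_zero hproj _ hz
    exact sub_eq_zero.mp this
  -- reduce to localizations at maximal ideals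
  have hsub : f p * g p' - g p * f p' = 0 := by
    apply eq_zero_of_localization
    intro J hJ
    haveI := hfin
    haveI := hproj
    set R := Localization.AtPrime J with hR
    let M := R ⊗[k] P
    haveI : Module.FinitePresentation R M := Module.finitePresentation_of_projective R M
    haveI : Module.Free R M := Module.free_of_flat_of_isLocalRing
    let ι := Module.Free.ChooseBasisIndex R M
    let b : Module.Basis ι R M := Module.Free.chooseBasis R M
    let fbar : M →ₗ[R] R := (TensorProduct.AlgebraTensorModule.rid k R R).toLinearMap ∘ₗ
      (LinearMap.baseChange R f)
    let gbar : M →ₗ[R] R := (TensorProduct.AlgebraTensorModule.rid k R R).toLinearMap ∘ₗ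
      (LinearMap.baseChange R g)
    have hfbar : ∀ u : P, fbar ((1:R) ⊗ₜ[k] u) = algebraMap k R (f u) := by
      intro u
      rw [LinearMap.comp_apply, LinearEquiv.coe_coe, LinearMap.baseChange_tmul,
        TensorProduct.AlgebraTensorModule.rid_tmul, Algebra.algebraMap_eq_smul_one]
    have hgbar : ∀ u : P, gbar ((1:R) ⊗ₜ[k] u) = algebraMap k R (g u) := by
      intro u
      rw [LinearMap.comp_apply, LinearEquiv.coe_coe, LinearMap.baseChange_tmul,
        TensorProduct.AlgebraTensorModule.rid_tmul, Algebra.algebraMap_eq_smul_one]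
    rw [map_sub, map_mul, map_mul, ← hfbar p, ← hfbar p', ← hgbar p, ← hgbar p']
    by_cases hnt : Nontrivial ι
    · -- at least two basis vectors: contradiction, the ring is trivial
      let τbar : M →ₗ[R] M := LinearMap.baseChange R τ
      have himg : ∀ u v : P,
          (((1:R) ⊗ₜ[k] u : M)) ⊗ₜ[R] (((1:R) ⊗ₜ[k] (τ v) : M))
            = (((1:R) ⊗ₜ[k] v : M)) ⊗ₜ[R] (((1:R) ⊗ₜ[k] u : M)) := by
        intro u v
        apply (TensorProduct.AlgebraTensorModule.distribBaseChange k R P P).symm.injective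
        simp only [TensorProduct.AlgebraTensorModule.distribBaseChange,
          LinearEquiv.symm_symm, LinearEquiv.trans_apply,
          TensorProduct.AlgebraTensorModule.cancelBaseChange_tmul, one_smul,
          TensorProduct.AlgebraTensorModule.assoc_tmul]
        exact congrArg _ (C6 u v)
      have hCbar : ∀ m m' : M, m ⊗ₜ[R] (τbar m') = m' ⊗ₜ[R] m := by
        intro m m'
        induction m using TensorProduct.induction_on with
        | zero => simp
        | tmul r u =>
          induction m' using TensorProduct.induction_on with
          | zero => simp
          | tmul r' v =>
            have h1 : (r ⊗ₜ[k] u : M) = r • ((1:R) ⊗ₜ[k] u) := by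
              rw [TensorProduct.smul_tmul', smul_eq_mul, mul_one]
            have h2 : (r' ⊗ₜ[k] (τ v) : M) = r' • ((1:R) ⊗ₜ[k] (τ v)) := by
              rw [TensorProduct.smul_tmul', smul_eq_mul, mul_one]
            have h3 : (r' ⊗ₜ[k] v : M) = r' • ((1:R) ⊗ₜ[k] v) := by
              rw [TensorProduct.smul_tmul', smul_eq_mul, mul_one]
            have hτb : τbar (r' ⊗ₜ[k] v) = r' ⊗ₜ[k] (τ v) :=
              LinearMap.baseChange_tmul _ _ _
            rw [hτb, h1, h2, h3, ← TensorProduct.smul_tmul', ← TensorProduct.smul_tmul',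
              TensorProduct.tmul_smul, TensorProduct.tmul_smul, himg u v, smul_comm]
          | add m1 m2 hm1 hm2 =>
            rw [map_add, TensorProduct.tmul_add, hm1, hm2, TensorProduct.add_tmul]
        | add m1 m2 hm1 hm2 =>
          rw [TensorProduct.add_tmul, hm1 , hm2, TensorProduct.tmul_add]
      obtain ⟨i, i', hii⟩ := exists_pair_ne ι
      have h10 : (0:R) = 1 := by
        have hC := hCbar (b i) (b i')
        have hrr := congrArg (fun z => ((b.tensorProduct b).repr z) (i', i)) hC
        simp only [Module.Basis.tensorProduct_repr_tmul_apply, Module.Basis.repr_self,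
          Finsupp.single_apply, if_neg hii, if_neg (Ne.symm hii), if_pos] at hrr
        simpa using hrr
      haveI : Subsingleton R := subsingleton_of_zero_eq_one h10
      exact Subsingleton.elim _ _
    · rw [not_nontrivial_iff_subsingleton] at hnt
      cases isEmpty_or_nonempty ι with
      | inl he =>
        have hM : ∀ m : M, m = 0 := by
          intro m
          have h0 : b.repr m = 0 := by
            ext i
            exact he.elim i
          have := congrArg b.repr.symm h0
          rw [LinearEquiv.symm_apply_apply, map_zero] at this
          exact this
        rw [hM ((1:R) ⊗ₜ[k] p), hM ((1:R) ⊗ₜ[k] p')]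
        simp
      | inr hne =>
        obtain ⟨i0⟩ := hne
        have hrep : ∀ m : M, m = (b.repr m i0) • b i0 := by
          intro m
          conv_lhs => rw [← b.sum_repr m]
          rw [Fintype.sum_eq_single i0 (fun x hx => absurd (Subsingleton.elim x i0) hx)]
        rw [hrep ((1:R) ⊗ₜ[k] p), hrep ((1:R) ⊗ₜ[k] p')]
        simp only [map_smul, smul_eq_mul]
        ring
  exact sub_eq_zero.mp hsub


end aux2


/-- Separability criterion for a `P`-Frobenius algebra `A` with Frobenius system
`(ψ, xᵢ, qᵢ, yᵢ)`: `A` is separable over `k` (has a separability idempotent) if and only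
if there is `d ∈ P ⊗ A` with `Σᵢ xᵢ (qᵢ d) yᵢ = 1`, using the pairing `Q ⊗ P → k`
(`qᵢ ∈ Q = P*` applied to the `P`-component of `d`). -/
theorem separability_criterion (k A P : Type*) [CommRing k] [AddCommGroup P] [Module k P]
    [Ring A] [Algebra k A] (hP : IsInvertibleModule k P)
    (hfin : Module.Finite k A) (hproj : Module.Projective k A)
    (n : ℕ) (ψ : A →ₗ[k] P) (x y : Fin n → A) (q : Fin n → Module.Dual k P)
    (hleft : ∀ a : A, ∑ i, q i (ψ (a * x i)) • y i = a)
    (hright : ∀ a : A, ∑ i, q i (ψ (y i * a)) • x i = a) :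
    (∃ e : A ⊗[k] A, LinearMap.mul' k A e = 1 ∧
      ∀ a : A, (LinearMap.rTensor A (LinearMap.mulLeft k a)) e
        = (LinearMap.lTensor A (LinearMap.mulRight k a)) e) ↔
    (∃ d : P ⊗[k] A,
      ∑ i, x i * (TensorProduct.lid k A) ((LinearMap.rTensor A (q i)) d) * y i = 1) := by
  classical
  obtain ⟨hPfin, hPproj, hPbij⟩ := hP
  constructor
  · rintro ⟨e, he1, he2⟩
    refine ⟨LinearMap.rTensor A ψ e, ?_⟩
    have hstep1 : ∀ (i : Fin n) (z : A ⊗[k] A),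
        TensorProduct.lid k A (LinearMap.rTensor A ((q i) ∘ₗ ψ) z) * y i
          = TensorProduct.lid k A (LinearMap.rTensor A ((q i) ∘ₗ ψ)
              (LinearMap.lTensor A (LinearMap.mulRight k (y i)) z)) := by
      intro i z
      induction z using TensorProduct.induction_on with
      | zero => simp
      | tmul u v =>
        simp only [LinearMap.rTensor_tmul, LinearMap.lTensor_tmul,
          TensorProduct.lid_tmul, LinearMap.mulRight_apply, LinearMap.comp_apply,
          smul_mul_assoc]
      | add z1 z2 h1 h2 => simp only [map_add, add_mul, h1, h2]
    have hstep2 : ∀ z : A ⊗[k] A,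
        ∑ i, x i * TensorProduct.lid k A
            (LinearMap.rTensor A (((q i) ∘ₗ ψ) ∘ₗ LinearMap.mulLeft k (y i)) z)
          = LinearMap.mul' k A z := by
      intro z
      induction z using TensorProduct.induction_on with
      | zero => simp
      | tmul u v =>
        have h1 : ∀ i : Fin n, x i * TensorProduct.lid k A
            (LinearMap.rTensor A (((q i) ∘ₗ ψ) ∘ₗ LinearMap.mulLeft k (y i)) (u ⊗ₜ[k] v))
            = (q i (ψ (y i * u)) • x i) * v := by
          intro i
          simp only [LinearMap.rTensor_tmul, TensorProduct.lid_tmul,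
            LinearMap.comp_apply, LinearMap.mulLeft_apply, smul_mul_assoc,
            mul_smul_comm]
        rw [Finset.sum_congr rfl fun i _ => h1 i, ← Finset.sum_mul, hright u,
          LinearMap.mul'_apply]
      | add z1 z2 h1 h2 =>
        simp only [map_add, mul_add, Finset.sum_add_distrib, h1, h2]
    calc ∑ i, x i * (TensorProduct.lid k A)
            ((LinearMap.rTensor A (q i)) (LinearMap.rTensor A ψ e)) * y i
        = ∑ i, x i * (TensorProduct.lid k A
            (LinearMap.rTensor A ((q i) ∘ₗ ψ) e) * y i) := by
          refine Finset.sum_congr rfl fun i _ => ?_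
          rw [mul_assoc, ← LinearMap.rTensor_comp_apply]
      _ = ∑ i, x i * (TensorProduct.lid k A (LinearMap.rTensor A ((q i) ∘ₗ ψ)
            (LinearMap.rTensor A (LinearMap.mulLeft k (y i)) e))) := by
          refine Finset.sum_congr rfl fun i _ => ?_
          rw [hstep1 i e, ← he2 (y i)]
      _ = ∑ i, x i * (TensorProduct.lid k A
            (LinearMap.rTensor A (((q i) ∘ₗ ψ) ∘ₗ LinearMap.mulLeft k (y i)) e)) := by
          refine Finset.sum_congr rfl fun i _ => ?_
          simp only [LinearMap.rTensor_comp_apply]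
      _ = LinearMap.mul' k A e := hstep2 e
      _ = 1 := he1
  · rintro ⟨d, hd⟩
    have hsym : ∀ (f g : Module.Dual k P) (pp pp' : P), f pp * g pp' = g pp * f pp' :=
      dual_symm_aux hPfin hPproj hPbij
    refine ⟨∑ i, (x i) ⊗ₜ[k]
      (TensorProduct.lid k A ((LinearMap.rTensor A (q i)) d) * y i), ?_, ?_⟩
    · rw [map_sum]
      simp only [LinearMap.mul'_apply]
      rw [← hd]
      exact Finset.sum_congr rfl fun i _ => (mul_assoc _ _ _).symm
    · intro a
      clear hd
      rw [map_sum, map_sum]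
      simp only [LinearMap.rTensor_tmul, LinearMap.lTensor_tmul,
        LinearMap.mulLeft_apply, LinearMap.mulRight_apply]
      induction d using TensorProduct.induction_on with
      | zero => simp
      | add d1 d2 h1 h2 =>
        simp only [map_add, add_mul, TensorProduct.tmul_add, Finset.sum_add_distrib,
          h1, h2]
      | tmul p b =>
        simp only [LinearMap.rTensor_tmul, TensorProduct.lid_tmul]
        have hXi : ∀ w : A ⊗[k] A,
            ∑ j, (x j) ⊗ₜ[k] (TensorProduct.lid k A (LinearMap.rTensor A
              ((q j) ∘ₗ ψ ∘ₗ LinearMap.mulLeft k (y j)) w)) = w := by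
          intro w
          induction w using TensorProduct.induction_on with
          | zero => simp
          | tmul u v =>
            have h1 : ∀ j : Fin n, (x j) ⊗ₜ[k] (TensorProduct.lid k A
                (LinearMap.rTensor A ((q j) ∘ₗ ψ ∘ₗ LinearMap.mulLeft k (y j)) (u ⊗ₜ[k] v)))
                = (q j (ψ (y j * u)) • x j) ⊗ₜ[k] v := by
              intro j
              simp only [LinearMap.rTensor_tmul, TensorProduct.lid_tmul,
                LinearMap.comp_apply, LinearMap.mulLeft_apply, TensorProduct.tmul_smul,
                TensorProduct.smul_tmul']
            rw [Finset.sum_congr rfl fun j _ => h1 j, ← TensorProduct.sum_tmul,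
              hright u]
          | add w1 w2 h1 h2 =>
            simp only [map_add, TensorProduct.tmul_add, Finset.sum_add_distrib, h1, h2]
        have hSL : ∀ j : Fin n,
            (∑ i, q j (ψ (y j * (a * x i))) • (q i p • b * y i))
              = q j p • (b * (y j * a)) := by
          intro j
          have h1 : ∀ i : Fin n, q j (ψ (y j * (a * x i))) • (q i p • b * y i)
              = q j p • (b * (q i (ψ ((y j * a) * x i)) • y i)) := by
            intro i
            rw [smul_mul_assoc, smul_smul, hsym (q j) (q i) (ψ (y j * (a * x i))) p,
              mul_comm (q i (ψ (y j * (a * x i)))) (q j p), ← smul_smul,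
              ← mul_smul_comm, ← mul_assoc]
          rw [Finset.sum_congr rfl fun i _ => h1 i, ← Finset.smul_sum,
            ← Finset.mul_sum, hleft (y j * a)]
        have hSR : ∀ j : Fin n,
            (∑ i, q j (ψ (y j * x i)) • (q i p • b * y i * a))
              = q j p • (b * (y j * a)) := by
          intro j
          have h1 : ∀ i : Fin n, q j (ψ (y j * x i)) • (q i p • b * y i * a)
              = q j p • ((b * (q i (ψ (y j * x i)) • y i)) * a) := by
            intro i
            have inner : q i (ψ (y j * x i)) • (b * y i * a)
                = b * (q i (ψ (y j * x i)) • y i) * a := by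
              rw [← smul_mul_assoc, ← mul_smul_comm]
            calc q j (ψ (y j * x i)) • (q i p • b * y i * a)
                = (q j (ψ (y j * x i)) * q i p) • (b * y i * a) := by
                  rw [smul_mul_assoc, smul_mul_assoc, smul_smul]
              _ = (q i (ψ (y j * x i)) * q j p) • (b * y i * a) := by
                  rw [hsym (q j) (q i) (ψ (y j * x i)) p]
              _ = q j p • (q i (ψ (y j * x i)) • (b * y i * a)) := by
                  rw [mul_comm (q i (ψ (y j * x i))) (q j p), ← smul_smul]
              _ = q j p • ((b * (q i (ψ (y j * x i)) • y i)) * a) := by rw [inner]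
          rw [Finset.sum_congr rfl fun i _ => h1 i, ← Finset.smul_sum,
            ← Finset.sum_mul, ← Finset.mul_sum, hleft (y j)]
          rw [mul_assoc]
        calc ∑ i, (a * x i) ⊗ₜ[k] (q i p • b * y i)
            = ∑ j, (x j) ⊗ₜ[k] (TensorProduct.lid k A (LinearMap.rTensor A
                ((q j) ∘ₗ ψ ∘ₗ LinearMap.mulLeft k (y j))
                (∑ i, (a * x i) ⊗ₜ[k] (q i p • b * y i)))) := (hXi _).symm
          _ = ∑ j, (x j) ⊗ₜ[k] (q j p • (b * (y j * a))) := by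
              refine Finset.sum_congr rfl fun j _ => ?_
              rw [map_sum, map_sum]
              simp only [LinearMap.rTensor_tmul, TensorProduct.lid_tmul,
                LinearMap.comp_apply, LinearMap.mulLeft_apply]
              rw [hSL j]
          _ = ∑ j, (x j) ⊗ₜ[k] (TensorProduct.lid k A (LinearMap.rTensor A
                ((q j) ∘ₗ ψ ∘ₗ LinearMap.mulLeft k (y j))
                (∑ i, (x i) ⊗ₜ[k] (q i p • b * y i * a)))) := by
              refine Finset.sum_congr rfl fun j _ => ?_
              rw [map_sum, map_sum]
              simp only [LinearMap.rTensor_tmul, TensorProduct.lid_tmul,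
                LinearMap.comp_apply, LinearMap.mulLeft_apply]
              rw [hSR j]
          _ = ∑ i, (x i) ⊗ₜ[k] (q i p • b * y i * a) := hXi _
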